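/- Let V be an n-dimensional complex vector space and let a be an (n-1)-dimensional abelian Lie subalgebra of sl(V) (traceless endomorphisms, with bracket the commutator). If a contains an endomorphism x with n distinct eigenvalues, then a equals the intersection of the centralizer of x with sl(V); in particular a consists of simultaneously diagonalizable endomorphisms. -/

import Mathlib

/-- If an `(n-1)`-dimensional abelian Lie subalgebra `a` of `sl(V)` (traceless
endomorphisms of an `n`-dimensional complex vector space, with commutator bracket)
contains an endomorphism `x` with `n` distinct eigenvalues, then `a` is the
intersection of the centralizer of `x` with `sl(V)`; in particular every element of
`a` is diagonal in the eigenbasis of `x`, hence `a` consists of simultaneously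
diagonalizable endomorphisms. -/
theorem abelian_subalgebra_with_regular_semisimple_eq_centralizer_inter_sl
    (V : Type*) [AddCommGroup V] [Module ℂ V] [FiniteDimensional ℂ V]
    (n : ℕ) (hV : Module.finrank ℂ V = n)
    (a : Submodule ℂ (Module.End ℂ V))
    (ha_sl : ∀ y ∈ a, LinearMap.trace ℂ V y = 0)
    (ha_dim : Module.finrank ℂ a = n - 1)
    (ha_ab : ∀ y ∈ a, ∀ z ∈ a, y * z = z * y)
    (x : Module.End ℂ V) (hxa : x ∈ a)
    (μ : Fin n → ℂ) (hμ : Function.Injective μ)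
    (b : Module.Basis (Fin n) ℂ V) (hx : ∀ i, x (b i) = μ i • b i) :
    ((a : Set (Module.End ℂ V)) =
      {y : Module.End ℂ V | x * y = y * x ∧ LinearMap.trace ℂ V y = 0}) ∧
    ∀ y ∈ a, ∀ i : Fin n, ∃ c : ℂ, y (b i) = c • b i := by
  -- Key: any endomorphism commuting with x is diagonal in the basis b
  have key : ∀ y : Module.End ℂ V, x * y = y * x →
      ∀ i, y (b i) = b.repr (y (b i)) i • b i := by
    intro y hc i
    set v := y (b i) with hv
    have hxv : x v = μ i • v := by
      have h := congrArg (fun z : Module.End ℂ V => z (b i)) hc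
      simp only [Module.End.mul_apply] at h
      rw [hx i, map_smul] at h
      exact h
    have hexp : x v = ∑ k, (μ k * b.repr v k) • b k := by
      conv_lhs => rw [← b.sum_repr v]
      rw [map_sum]
      refine Finset.sum_congr rfl fun k _ => ?_
      rw [map_smul, hx k, smul_smul, mul_comm]
    have hcoef : ∀ j, μ j * b.repr v j = μ i * b.repr v j := by
      intro j
      have h1 : b.repr (x v) j = μ i * b.repr v j := by rw [hxv]; simp
      have h2 : b.repr (x v) j = μ j * b.repr v j := by
        rw [hexp, map_sum]
        simp [Finsupp.single_apply, Finset.sum_ite_eq']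
      rw [← h1, ← h2]
    have hzero : ∀ j, j ≠ i → b.repr v j = 0 := by
      intro j hj
      have := hcoef j
      have hne : μ j ≠ μ i := fun h => hj (hμ h)
      by_contra h0
      exact hne (mul_right_cancel₀ h0 this)
    conv_lhs => rw [← b.sum_repr v]
    rw [Finset.sum_eq_single i]
    · intro j _ hj; rw [hzero j hj, zero_smul]
    · intro h; exact absurd (Finset.mem_univ i) h
  -- The centralizer-∩-sl submodule
  let S : Submodule ℂ (Module.End ℂ V) :=
    { carrier := {y | x * y = y * x ∧ LinearMap.trace ℂ V y = 0}
      add_mem' := by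
        rintro p q ⟨hp1, hp2⟩ ⟨hq1, hq2⟩
        exact ⟨by rw [mul_add, add_mul, hp1, hq1], by simp [hp2, hq2]⟩
      zero_mem' := by simp
      smul_mem' := by
        rintro c p ⟨hp1, hp2⟩
        exact ⟨by rw [mul_smul_comm, smul_mul_assoc, hp1], by simp [hp2]⟩ }
  have haS : a ≤ S := by
    intro y hy
    exact ⟨ha_ab x hxa y hy, ha_sl y hy⟩
  -- the "diagonal" linear map
  let ψ : Module.End ℂ V →ₗ[ℂ] (Fin n → ℂ) :=
    { toFun := fun y i => b.repr (y (b i)) i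
      map_add' := by intro y z; funext i; simp
      map_smul' := by intro c y; funext i; simp }
  have htr : ∀ y : Module.End ℂ V, LinearMap.trace ℂ V y = ∑ i, ψ y i := by
    intro y
    rw [LinearMap.trace_eq_matrix_trace ℂ b y]
    simp [Matrix.trace, Matrix.diag, LinearMap.toMatrix_apply, ψ]
  -- sum functional
  let f : (Fin n → ℂ) →ₗ[ℂ] ℂ :=
    { toFun := fun d => ∑ i, d i
      map_add' := by intro p q; simp [Finset.sum_add_distrib]
      map_smul' := by intro c p; simp [Finset.mul_sum] }
  have hker : Module.finrank ℂ (LinearMap.ker f) ≤ n - 1 := by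
    rcases Nat.eq_zero_or_pos n with hn | hn
    · subst hn
      have : Module.finrank ℂ (LinearMap.ker f) ≤ Module.finrank ℂ (Fin 0 → ℂ) :=
        Submodule.finrank_le _
      simpa using this
    · have hsurj : LinearMap.range f = ⊤ := by
        rw [LinearMap.range_eq_top]
        intro c
        refine ⟨fun i => if i = ⟨0, hn⟩ then c else 0, ?_⟩
        simp [f, Finset.sum_ite_eq']
      have := LinearMap.finrank_range_add_finrank_ker f
      rw [hsurj] at this
      simp only [finrank_top, Module.finrank_self, Module.finrank_fin_fun] at this
      omega
  -- ψ restricted to S lands in ker f and is injective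
  have hrange : ∀ y ∈ S, ψ y ∈ LinearMap.ker f := by
    intro y hy
    rw [LinearMap.mem_ker]
    have := hy.2
    rw [htr y] at this
    exact this
  let g : S →ₗ[ℂ] LinearMap.ker f :=
    LinearMap.codRestrict (LinearMap.ker f) (ψ.domRestrict S) (fun y => hrange y y.2)
  have hginj : Function.Injective g := by
    rw [← LinearMap.ker_eq_bot]
    rw [Submodule.eq_bot_iff]
    rintro ⟨y, hy⟩ hgy
    have hψy : ψ y = 0 := by
      have := congrArg Subtype.val hgy
      exact this
    have hy0 : y = 0 := by
      apply b.ext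
      intro i
      have := key y hy.1 i
      rw [this]
      have : ψ y i = 0 := by rw [hψy]; rfl
      simp only [ψ, LinearMap.coe_mk, AddHom.coe_mk] at this
      simp [this]
    simp [hy0]
  have hSdim : Module.finrank ℂ S ≤ n - 1 :=
    le_trans (LinearMap.finrank_le_finrank_of_injective hginj) hker
  have heq : a = S := by
    refine Submodule.eq_of_le_of_finrank_le haS ?_
    rw [ha_dim]
    exact hSdim
  constructor
  · rw [heq]; rfl
  · intro y hy i
    exact ⟨b.repr (y (b i)) i, key y (ha_ab x hxa y hy) i⟩
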